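/- Let χ be a probability distribution on a finite set A and let 1/2 ≤ c < 1 be a constant. Then there exist constants C > 0, γ > 0 and N₀ ∈ ℕ such that for every n ≥ N₀, every m ≥ 1, and every set S ⊆ A^n of cardinality min(2^{⌈H(χ)·n + C·√n⌉}, |A|^n) consisting of most likely keys (i.e., P_n(x) ≥ P_n(y) for all x ∈ S and y ∉ S), the probability over m i.i.d. samples k_1, …, k_m ← χ^n that at least c·m of them lie in S is at least 1 − e^{−γ·m}. -/

import Mathlib

open scoped Classical

lemma sum_pi_prod {ι B : Type*} [Fintype ι] [DecidableEq ι] [Fintype B] (h : ι → B → ℝ) :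
    ∑ x : ι → B, ∏ i, h i (x i) = ∏ i, ∑ a, h i a := by
  rw [Finset.prod_univ_sum (fun _ => Finset.univ) h, Fintype.piFinset_univ]

lemma sum_le_sum_of_most_likely {B : Type*} [Fintype B] [DecidableEq B] (w : B → ℝ)
    (hw : ∀ b, 0 ≤ w b) (S T : Finset B)
    (hcard : T.card ≤ S.card)
    (hS : ∀ x ∈ S, ∀ y ∉ S, w y ≤ w x) :
    ∑ y ∈ T, w y ≤ ∑ x ∈ S, w x := by
  rw [← Finset.sum_inter_add_sum_sdiff T S w, ← Finset.sum_inter_add_sum_sdiff S T w,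
    Finset.inter_comm S T]
  have hdc : (T \ S).card ≤ (S \ T).card := by
    have h1 := Finset.card_inter_add_card_sdiff T S
    have h2 := Finset.card_inter_add_card_sdiff S T
    rw [Finset.inter_comm S T] at h2
    omega
  have key : ∑ y ∈ T \ S, w y ≤ ∑ x ∈ S \ T, w x := by
    rcases (T \ S).eq_empty_or_nonempty with he | hne
    · rw [he, Finset.sum_empty]
      exact Finset.sum_nonneg fun x _ => hw x
    · have hST : (S \ T).Nonempty := by
        rw [← Finset.card_pos] at hne ⊢; omega
      obtain ⟨x₀, hx₀, hmin⟩ := Finset.exists_min_image (S \ T) w hST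
      have hx₀S : x₀ ∈ S := (Finset.mem_sdiff.mp hx₀).1
      calc ∑ y ∈ T \ S, w y ≤ (T \ S).card • w x₀ := by
            apply Finset.sum_le_card_nsmul
            intro y hy
            exact hS x₀ hx₀S y (Finset.mem_sdiff.mp hy).2
        _ ≤ (S \ T).card • w x₀ := by
            apply nsmul_le_nsmul_left (hw x₀) hdc
        _ ≤ ∑ x ∈ S \ T, w x := Finset.card_nsmul_le_sum _ _ _ hmin
  linarith

lemma exp_sq_sum {A : Type*} [Fintype A] (n : ℕ) (P g : A → ℝ) (hsum : ∑ a, P a = 1)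
    (hmean : ∑ a, P a * g a = 0) :
    ∑ x : Fin n → A, (∏ i, P (x i)) * (∑ i, g (x i)) ^ 2 = n * ∑ a, P a * g a ^ 2 := by
  classical
  have key : ∀ i i' : Fin n, ∑ x : Fin n → A, (∏ k, P (x k)) * (g (x i) * g (x i'))
      = if i = i' then ∑ a, P a * g a ^ 2 else 0 := by
    intro i i'
    have step : ∀ x : Fin n → A, (∏ k, P (x k)) * (g (x i) * g (x i'))
        = ∏ k, (P (x k) * (if k = i then g (x k) else 1) * (if k = i' then g (x k) else 1)) := by
      intro x
      rw [Finset.prod_mul_distrib, Finset.prod_mul_distrib,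
        Finset.prod_ite_eq' Finset.univ i (fun k => g (x k)),
        Finset.prod_ite_eq' Finset.univ i' (fun k => g (x k))]
      simp [mul_assoc]
    rw [Finset.sum_congr rfl fun x _ => step x]
    rw [show (∑ x : Fin n → A, ∏ k, (P (x k) * (if k = i then g (x k) else 1)
          * (if k = i' then g (x k) else 1)))
        = ∏ k, ∑ a, (P a * (if k = i then g a else 1) * (if k = i' then g a else 1)) from
      sum_pi_prod (fun k a => P a * (if k = i then g a else 1) * (if k = i' then g a else 1))]
    by_cases hii : i = i'
    · subst hii
      rw [if_pos rfl]
      rw [Finset.prod_eq_single i]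
      · apply Finset.sum_congr rfl; intro a _; simp [pow_two, mul_assoc]
      · intro k _ hk
        simp only [if_neg hk, mul_one]
        exact hsum
      · simp
    · rw [if_neg hii]
      apply Finset.prod_eq_zero (Finset.mem_univ i)
      simp only [if_pos rfl, if_neg hii]
      simpa [mul_one] using hmean
  calc ∑ x : Fin n → A, (∏ i, P (x i)) * (∑ i, g (x i)) ^ 2
      = ∑ x : Fin n → A, ∑ i, ∑ i', (∏ k, P (x k)) * (g (x i) * g (x i')) := by
        apply Finset.sum_congr rfl; intro x _
        rw [pow_two, Finset.sum_mul_sum, Finset.mul_sum]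
        apply Finset.sum_congr rfl; intro i _
        rw [Finset.mul_sum]
    _ = ∑ i : Fin n, ∑ i' : Fin n, ∑ x : Fin n → A, (∏ k, P (x k)) * (g (x i) * g (x i')) := by
        rw [Finset.sum_comm]
        apply Finset.sum_congr rfl; intro i _
        rw [Finset.sum_comm]
    _ = ∑ i : Fin n, ∑ i' : Fin n, if i = i' then ∑ a, P a * g a ^ 2 else 0 := by
        apply Finset.sum_congr rfl; intro i _
        apply Finset.sum_congr rfl; intro i' _
        exact key i i'
    _ = n * ∑ a, P a * g a ^ 2 := by
        simp [Finset.sum_ite_eq, Finset.mul_sum]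

lemma most_likely_mass {A : Type*} [Fintype A] (P : A → ℝ) (hpos : ∀ a, 0 < P a)
    (hsum : ∑ a, P a = 1)
    (H : ℝ) (hH : H = ∑ a, P a * (-Real.logb 2 (P a)))
    (q C : ℝ) (hq : 0 < q) (hC : 0 < C)
    (hvar : ∑ a, P a * (-Real.logb 2 (P a) - H) ^ 2 ≤ q * C ^ 2)
    (n : ℕ) (hn : 1 ≤ n) (S : Finset (Fin n → A))
    (hcard : min (2 ^ ⌈H * n + C * Real.sqrt n⌉₊) (Fintype.card A ^ n) ≤ S.card)
    (hS : ∀ x ∈ S, ∀ y ∉ S, (∏ i, P (y i)) ≤ ∏ i, P (x i)) :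
    1 - q ≤ ∑ x ∈ S, ∏ i, P (x i) := by
  classical
  have hw : ∀ x : Fin n → A, 0 ≤ ∏ i, P (x i) :=
    fun x => Finset.prod_nonneg fun i _ => (hpos (x i)).le
  have hwpos : ∀ x : Fin n → A, 0 < ∏ i, P (x i) :=
    fun x => Finset.prod_pos fun i _ => hpos (x i)
  have htot : ∑ x : Fin n → A, ∏ i, P (x i) = 1 := by
    simpa [hsum] using sum_pi_prod (fun (_ : Fin n) a => P a)
  have hmean : ∑ a, P a * (-Real.logb 2 (P a) - H) = 0 := by
    have expand : ∑ a, P a * (-Real.logb 2 (P a) - H)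
        = (∑ a, P a * (-Real.logb 2 (P a))) - (∑ a, P a) * H := by
      rw [Finset.sum_mul, ← Finset.sum_sub_distrib]
      exact Finset.sum_congr rfl fun a _ => by ring
    rw [expand, ← hH, hsum, one_mul, sub_self]
  have hvarsum : ∑ x : Fin n → A, (∏ i, P (x i)) * (∑ i, (-Real.logb 2 (P (x i)) - H)) ^ 2
      = n * ∑ a, P a * (-Real.logb 2 (P a) - H) ^ 2 :=
    exp_sq_sum n P (fun a => -Real.logb 2 (P a) - H) hsum hmean
  set r : ℝ := C * Real.sqrt n with hr
  have hrpos : 0 < r := by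
    apply mul_pos hC
    apply Real.sqrt_pos.mpr
    exact_mod_cast Nat.pos_of_ne_zero (by omega)
  have hr2 : r ^ 2 = C ^ 2 * n := by
    rw [hr, mul_pow, Real.sq_sqrt (Nat.cast_nonneg n)]
  set D : (Fin n → A) → ℝ := fun x => ∑ i, (-Real.logb 2 (P (x i)) - H) with hD
  set T : Finset (Fin n → A) := Finset.univ.filter (fun x => D x < r) with hT
  -- Chebyshev bound on the complement of T
  have hbad : ∑ x ∈ Finset.univ.filter (fun x : Fin n → A => ¬ D x < r), (∏ i, P (x i)) ≤ q := by
    have h1 : ∀ x ∈ Finset.univ.filter (fun x : Fin n → A => ¬ D x < r),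
        (∏ i, P (x i)) ≤ (∏ i, P (x i)) * (D x / r) ^ 2 := by
      intro x hx
      have hx' : r ≤ D x := not_lt.mp (Finset.mem_filter.mp hx).2
      have h2 : 1 ≤ D x / r := (le_div_iff₀ hrpos).mpr (by linarith)
      nlinarith [hwpos x, sq_nonneg (D x / r - 1)]
    calc ∑ x ∈ Finset.univ.filter (fun x : Fin n → A => ¬ D x < r), (∏ i, P (x i))
        ≤ ∑ x ∈ Finset.univ.filter (fun x : Fin n → A => ¬ D x < r),
            (∏ i, P (x i)) * (D x / r) ^ 2 := Finset.sum_le_sum h1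
      _ ≤ ∑ x : Fin n → A, (∏ i, P (x i)) * (D x / r) ^ 2 :=
          Finset.sum_le_sum_of_subset_of_nonneg (Finset.filter_subset _ _)
            (fun x _ _ => mul_nonneg (hw x) (sq_nonneg _))
      _ = (∑ x : Fin n → A, (∏ i, P (x i)) * D x ^ 2) / r ^ 2 := by
          rw [Finset.sum_div]
          exact Finset.sum_congr rfl fun x _ => by rw [div_pow]; ring
      _ ≤ q := by
          rw [hvarsum, hr2, div_le_iff₀ (by positivity)]
          have hn' : (1 : ℝ) ≤ (n : ℝ) := by exact_mod_cast hn
          nlinarith [hvar]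
  have hTmass : 1 - q ≤ ∑ x ∈ T, ∏ i, P (x i) := by
    have hsp := Finset.sum_filter_add_sum_filter_not Finset.univ
      (fun x : Fin n → A => D x < r) (fun x => ∏ i, P (x i))
    rw [htot] at hsp
    rw [hT]
    linarith [hbad]
  -- cardinality of T
  have hTcard : T.card ≤ S.card := by
    have hmem : ∀ x ∈ T, (2 : ℝ) ^ (-(H * n + r)) < ∏ i, P (x i) := by
      intro x hx
      have hDx : D x < r := (Finset.mem_filter.mp hx).2
      have hlogb : Real.logb 2 (∏ i, P (x i)) = ∑ i, Real.logb 2 (P (x i)) :=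
        Real.logb_prod _ _ fun i _ => (hpos (x i)).ne'
      have hsumf : D x = -Real.logb 2 (∏ i, P (x i)) - H * n := by
        rw [hD, hlogb]
        simp only [Finset.sum_sub_distrib, Finset.sum_neg_distrib, Finset.sum_const,
          Finset.card_univ, Fintype.card_fin, nsmul_eq_mul]
        ring
      have h2 : -(H * n + r) < Real.logb 2 (∏ i, P (x i)) := by
        rw [hsumf] at hDx; linarith
      calc (2 : ℝ) ^ (-(H * n + r)) < (2 : ℝ) ^ Real.logb 2 (∏ i, P (x i)) :=
            (Real.rpow_lt_rpow_left_iff (by norm_num)).mpr h2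
        _ = ∏ i, P (x i) := Real.rpow_logb (by norm_num) (by norm_num) (hwpos x)
    have hpow : (0 : ℝ) < (2 : ℝ) ^ (-(H * n + r)) := Real.rpow_pos_of_pos (by norm_num) _
    have hcount : (T.card : ℝ) * (2 : ℝ) ^ (-(H * n + r)) ≤ 1 := by
      have h3 : (T.card : ℝ) * (2 : ℝ) ^ (-(H * n + r)) ≤ ∑ x ∈ T, ∏ i, P (x i) := by
        have := Finset.card_nsmul_le_sum T (fun x => ∏ i, P (x i))
          ((2 : ℝ) ^ (-(H * n + r))) (fun x hx => (hmem x hx).le)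
        simpa [nsmul_eq_mul] using this
      have h4 : ∑ x ∈ T, ∏ i, P (x i) ≤ 1 := by
        rw [← htot]
        exact Finset.sum_le_sum_of_subset_of_nonneg (Finset.subset_univ T) fun x _ _ => hw x
      linarith
    have h2r : (T.card : ℝ) ≤ (2 : ℝ) ^ (H * n + r) := by
      have := (le_div_iff₀ hpow).mpr hcount
      rwa [Real.rpow_neg (by norm_num), one_div, inv_inv] at this
    have hnat : T.card ≤ 2 ^ ⌈H * n + C * Real.sqrt n⌉₊ := by
      have h3 : (2 : ℝ) ^ (H * n + r) ≤ (2 : ℝ) ^ ((⌈H * n + r⌉₊ : ℕ) : ℝ) :=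
        (Real.rpow_le_rpow_left_iff (by norm_num)).mpr (Nat.le_ceil _)
      rw [Real.rpow_natCast] at h3
      have h4 : (T.card : ℝ) ≤ ((2 ^ ⌈H * n + r⌉₊ : ℕ) : ℝ) := by push_cast; linarith
      rw [hr] at h4
      exact_mod_cast h4
    have hnat2 : T.card ≤ Fintype.card A ^ n := by
      calc T.card ≤ Fintype.card (Fin n → A) := Finset.card_le_univ T
        _ = Fintype.card A ^ n := by rw [Fintype.card_fun, Fintype.card_fin]
    exact le_trans (le_min hnat hnat2) hcard
  calc 1 - q ≤ ∑ x ∈ T, ∏ i, P (x i) := hTmass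
    _ ≤ ∑ x ∈ S, ∏ i, P (x i) :=
        sum_le_sum_of_most_likely _ hw S T hTcard hS

lemma chernoff_bound {B : Type*} [Fintype B] [DecidableEq B] (w : B → ℝ)
    (hw : ∀ b, 0 ≤ w b) (htot : ∑ b, w b = 1)
    (S : Finset B) (c q : ℝ) (hq0 : 0 ≤ q) (hmass : 1 - q ≤ ∑ b ∈ S, w b)
    (m : ℕ) :
    ∑ k ∈ Finset.univ.filter (fun k : Fin m → B =>
        ¬ c * m ≤ ((Finset.univ.filter (fun j => k j ∈ S)).card : ℝ)),
      ∏ j, w (k j)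
    ≤ (Real.exp (-(1 - c)) * (1 + q * (Real.exp 1 - 1))) ^ m := by
  classical
  have he1 : 1 < Real.exp 1 := by linarith [Real.exp_one_gt_d9]
  set e1 : ℝ := Real.exp 1 with he1def
  set g : B → ℝ := fun b => if b ∈ S then 1 else e1 with hg
  have hgnn : ∀ b, 0 ≤ g b := by
    intro b; rw [hg]; dsimp only; split <;> linarith
  set β : ℝ := 1 - c with hβ
  have step1 : ∀ k ∈ Finset.univ.filter (fun k : Fin m → B =>
      ¬ c * m ≤ ((Finset.univ.filter (fun j => k j ∈ S)).card : ℝ)),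
      ∏ j, w (k j) ≤ Real.exp (-β * m) * ∏ j, (w (k j) * g (k j)) := by
    intro k hk
    rw [Finset.mem_filter] at hk
    have hcount : ((Finset.univ.filter (fun j => k j ∈ S)).card : ℝ) < c * m :=
      not_le.mp hk.2
    have hprodg : ∏ j, g (k j)
        = Real.exp ((Finset.univ.filter (fun j => ¬ k j ∈ S)).card : ℝ) := by
      have h1 : ∀ j : Fin m, g (k j) = Real.exp (if k j ∈ S then 0 else 1) := by
        intro j; rw [hg]; dsimp only; split <;> simp [he1def]
      rw [Finset.prod_congr rfl fun j _ => h1 j, ← Real.exp_sum]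
      congr 1
      have h2 : ∑ j : Fin m, (if k j ∈ S then (0:ℝ) else 1)
          = ∑ j : Fin m, (if ¬ k j ∈ S then (1:ℝ) else 0) :=
        Finset.sum_congr rfl fun j _ => by by_cases h : k j ∈ S <;> simp [h]
      rw [h2, Finset.sum_boole]
    have hcards : (Finset.univ.filter (fun j => k j ∈ S)).card
        + (Finset.univ.filter (fun j => ¬ k j ∈ S)).card = m := by
      simpa using Finset.card_filter_add_card_filter_not
        (s := (Finset.univ : Finset (Fin m))) (fun j => k j ∈ S)
    have hfail : β * m ≤ ((Finset.univ.filter (fun j => ¬ k j ∈ S)).card : ℝ) := by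
      have h3 : ((Finset.univ.filter (fun j => ¬ k j ∈ S)).card : ℝ)
          = m - ((Finset.univ.filter (fun j => k j ∈ S)).card : ℝ) := by
        have := hcards; push_cast [← this]; ring
      rw [h3, hβ]; nlinarith [hcount]
    have hge1 : 1 ≤ Real.exp (-β * m) * ∏ j, g (k j) := by
      rw [hprodg, ← Real.exp_add]
      exact Real.one_le_exp (by linarith)
    have hwk : 0 ≤ ∏ j, w (k j) := Finset.prod_nonneg fun j _ => hw _
    have heq : Real.exp (-β * m) * ∏ j, (w (k j) * g (k j))
        = (∏ j, w (k j)) * (Real.exp (-β * m) * ∏ j, g (k j)) := by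
      rw [Finset.prod_mul_distrib]; ring
    rw [heq]
    exact le_mul_of_one_le_right hwk hge1
  calc ∑ k ∈ Finset.univ.filter (fun k : Fin m → B =>
        ¬ c * m ≤ ((Finset.univ.filter (fun j => k j ∈ S)).card : ℝ)), ∏ j, w (k j)
      ≤ ∑ k ∈ Finset.univ.filter (fun k : Fin m → B =>
          ¬ c * m ≤ ((Finset.univ.filter (fun j => k j ∈ S)).card : ℝ)),
          Real.exp (-β * m) * ∏ j, (w (k j) * g (k j)) := Finset.sum_le_sum step1
    _ ≤ ∑ k : Fin m → B, Real.exp (-β * m) * ∏ j, (w (k j) * g (k j)) :=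
        Finset.sum_le_sum_of_subset_of_nonneg (Finset.filter_subset _ _)
          (fun k _ _ => mul_nonneg (Real.exp_pos _).le
            (Finset.prod_nonneg fun j _ => mul_nonneg (hw _) (hgnn _)))
    _ = Real.exp (-β * m) * (∑ b, w b * g b) ^ m := by
        rw [← Finset.mul_sum]
        congr 1
        rw [show (∑ k : Fin m → B, ∏ j, (w (k j) * g (k j)))
            = ∏ _j : Fin m, ∑ b, w b * g b from sum_pi_prod (fun _ b => w b * g b)]
        rw [Finset.prod_const, Finset.card_univ, Fintype.card_fin]
    _ ≤ (Real.exp (-β) * (1 + q * (e1 - 1))) ^ m := by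
        have h1 : Finset.univ.filter (fun b => b ∈ S) = S := Finset.filter_univ_mem S
        have h2 := Finset.sum_filter_add_sum_filter_not Finset.univ (fun b => b ∈ S) w
        rw [h1, htot] at h2
        have hsplit : ∑ b, w b * g b
            = (∑ b ∈ S, w b) + e1 * (1 - ∑ b ∈ S, w b) := by
          rw [← Finset.sum_filter_add_sum_filter_not Finset.univ (fun b => b ∈ S)
            (fun b => w b * g b), h1]
          have h3 : ∀ b ∈ S, w b * g b = w b := by
            intro b hb; rw [hg]; dsimp only; rw [if_pos hb, mul_one]
          have h4 : ∀ b ∈ Finset.univ.filter (fun b => ¬ b ∈ S), w b * g b = e1 * w b := by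
            intro b hb
            rw [hg]; dsimp only
            rw [if_neg (Finset.mem_filter.mp hb).2]; ring
          rw [Finset.sum_congr rfl h3, Finset.sum_congr rfl h4, ← Finset.mul_sum]
          have h5 : ∑ b ∈ Finset.univ.filter (fun b => ¬ b ∈ S), w b
              = 1 - ∑ b ∈ S, w b := by linarith
          rw [h5]
        have hp1 : ∑ b ∈ S, w b ≤ 1 := by
          have h6 : 0 ≤ ∑ b ∈ Finset.univ.filter (fun b => ¬ b ∈ S), w b :=
            Finset.sum_nonneg fun b _ => hw b
          linarith
        have hbase0 : 0 ≤ ∑ b, w b * g b :=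
          Finset.sum_nonneg fun b _ => mul_nonneg (hw b) (hgnn b)
        have hbase : ∑ b, w b * g b ≤ 1 + q * (e1 - 1) := by
          rw [hsplit]; nlinarith [hmass, hp1, he1, hq0]
        have hmul : Real.exp (-β * m) = Real.exp (-β) ^ m := by
          rw [show -β * (m : ℝ) = (m : ℝ) * (-β) by ring, Real.exp_nat_mul]
        rw [hmul, ← mul_pow]
        apply pow_le_pow_left₀ (mul_nonneg (Real.exp_pos _).le hbase0)
        exact mul_le_mul_of_nonneg_left hbase (Real.exp_pos _).le


/-- **Multi-key guessing, fraction `1/2 ≤ c < 1`.** Let `χ` be a distribution on a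
finite set `A` with pmf `P` and Shannon entropy `H(χ) = −∑ a, P a · log₂ (P a)`, and
let `1/2 ≤ c < 1`. Then there are constants `C > 0`, `γ > 0` and `N₀` such that for
all `n ≥ N₀`, all `m ≥ 1`, and every set `S ⊆ A^n` of cardinality
`min(2^⌈H(χ)·n + C·√n⌉, |A|^n)` consisting of most likely keys (i.e. `P_n x ≥ P_n y`
for `x ∈ S`, `y ∉ S`), the probability over `m` i.i.d. samples from `χ^n` that at
least `c·m` of them lie in `S` is at least `1 − e^{−γ·m}`. -/
theorem multikey_guessing_large_fraction {A : Type*} [Fintype A]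
    (P : A → ℝ) (hpos : ∀ a, 0 < P a) (hle : ∀ a, P a ≤ 1)
    (hsum : ∑ a, P a = 1)
    (c : ℝ) (hc0 : 1 / 2 ≤ c) (hc : c < 1) :
    ∃ C > (0 : ℝ), ∃ γ > (0 : ℝ), ∃ N₀ : ℕ, ∀ n ≥ N₀, ∀ m : ℕ, 1 ≤ m →
      ∀ S : Finset (Fin n → A),
        S.card =
          min (2 ^ ⌈(-∑ x, P x * Real.logb 2 (P x)) * n + C * Real.sqrt n⌉₊)
            (Fintype.card A ^ n) →
        (∀ x ∈ S, ∀ y ∉ S, (∏ i, P (y i)) ≤ ∏ i, P (x i)) →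
        1 - Real.exp (-γ * m) ≤
          ∑ k ∈ Finset.univ.filter (fun k : Fin m → Fin n → A =>
              c * m ≤ ((Finset.univ.filter (fun j => k j ∈ S)).card : ℝ)),
            ∏ j, ∏ i, P (k j i) := by
  classical
  set H : ℝ := -∑ x, P x * Real.logb 2 (P x) with hHdef
  have hH : H = ∑ a, P a * (-Real.logb 2 (P a)) := by
    rw [hHdef, ← Finset.sum_neg_distrib]
    exact Finset.sum_congr rfl fun a _ => by ring
  set σ2 : ℝ := ∑ a, P a * (-Real.logb 2 (P a) - H) ^ 2 with hσ2
  have hσ0 : 0 ≤ σ2 := Finset.sum_nonneg fun a _ => mul_nonneg (hpos a).le (sq_nonneg _)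
  set β : ℝ := 1 - c with hβdef
  have hβ : 0 < β := by rw [hβdef]; linarith
  set C : ℝ := Real.sqrt (2 * σ2 / β) + 1 with hCdef
  have hCpos : 0 < C := by
    have := Real.sqrt_nonneg (2 * σ2 / β); rw [hCdef]; linarith
  have hvar : σ2 ≤ (β / 2) * C ^ 2 := by
    have h1 : Real.sqrt (2 * σ2 / β) ^ 2 = 2 * σ2 / β :=
      Real.sq_sqrt (by positivity)
    have h2 := Real.sqrt_nonneg (2 * σ2 / β)
    rw [hCdef]
    have h3 : (Real.sqrt (2 * σ2 / β) + 1) ^ 2 ≥ 2 * σ2 / β := by nlinarith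
    rw [ge_iff_le, div_le_iff₀ hβ] at h3
    nlinarith
  have he1 : 1 < Real.exp 1 := by linarith [Real.exp_one_gt_d9]
  have he3 : Real.exp 1 < 3 := by linarith [Real.exp_one_lt_d9]
  set ρ : ℝ := Real.exp (-β) * (1 + (β / 2) * (Real.exp 1 - 1)) with hρ
  have hρpos : 0 < ρ := mul_pos (Real.exp_pos _) (by nlinarith)
  have hρlt : ρ < 1 := by
    have h2 : β + 1 < Real.exp β := Real.add_one_lt_exp hβ.ne'
    have key : 1 + (β / 2) * (Real.exp 1 - 1) < Real.exp β := by nlinarith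
    calc ρ < Real.exp (-β) * Real.exp β :=
          mul_lt_mul_of_pos_left key (Real.exp_pos _)
      _ = 1 := by rw [← Real.exp_add]; simp
  refine ⟨C, hCpos, -Real.log ρ, neg_pos.mpr (Real.log_neg hρpos hρlt), 1, ?_⟩
  intro n hn m hm S hcard hS
  have hmass : 1 - β / 2 ≤ ∑ x ∈ S, ∏ i, P (x i) := by
    apply most_likely_mass P hpos hsum H hH (β / 2) C (by positivity) hCpos ?_ n hn S ?_ hS
    · rw [← hσ2]; exact hvar
    · exact le_of_eq hcard.symm
  have hw : ∀ x : Fin n → A, 0 ≤ ∏ i, P (x i) :=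
    fun x => Finset.prod_nonneg fun i _ => (hpos (x i)).le
  have htotn : ∑ x : Fin n → A, ∏ i, P (x i) = 1 := by
    simpa [hsum] using sum_pi_prod (fun (_ : Fin n) a => P a)
  have hbad := chernoff_bound (fun x : Fin n → A => ∏ i, P (x i)) hw htotn S c (β / 2)
    (by positivity) hmass m
  have htotk : ∑ k : Fin m → Fin n → A, ∏ j, ∏ i, P (k j i) = 1 := by
    have h := sum_pi_prod (fun (_ : Fin m) (x : Fin n → A) => ∏ i, P (x i))
    simpa [htotn] using h
  have hsplitk := Finset.sum_filter_add_sum_filter_not Finset.univ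
    (fun k : Fin m → Fin n → A =>
      c * m ≤ ((Finset.univ.filter (fun j => k j ∈ S)).card : ℝ))
    (fun k => ∏ j, ∏ i, P (k j i))
  rw [htotk] at hsplitk
  have hexp : Real.exp (-(-Real.log ρ) * m) = ρ ^ m := by
    rw [show -(-Real.log ρ) * (m : ℝ) = (m : ℝ) * Real.log ρ by ring,
      Real.exp_nat_mul, Real.exp_log hρpos]
  rw [hexp]
  have hbad' : ∑ k ∈ Finset.univ.filter (fun k : Fin m → Fin n → A =>
      ¬ c * m ≤ ((Finset.univ.filter (fun j => k j ∈ S)).card : ℝ)),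
      ∏ j, ∏ i, P (k j i) ≤ ρ ^ m := by
    rw [hρ, hβdef]
    exact hbad
  linarith
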